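/- arXiv:2202.02495 — 2 statements merged into one kernel-verified Lean document; each statement's English description precedes it below -/
import Mathlib

section
/- For every integer k ≥ 0, the Weisfeiler–Lehman distance of depth k is a pseudo-distance on the collection of Z-LMMCs: d_WL^(k) is nonnegative, symmetric, vanishes on every pair of isomorphic Z-LMMCs, and satisfies the triangle inequality d_WL^(k)((𝒳,ℓ_X),(𝒲,ℓ_W)) ≤ d_WL^(k)((𝒳,ℓ_X),(𝒴,ℓ_Y)) + d_WL^(k)((𝒴,ℓ_Y),(𝒲,ℓ_W)) for all Z-LMMCs; consequently the absolute WL distance d_WL = sup_{k≥0} d_WL^(k) has the same three properties. -/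
open scoped BigOperators NNReal

namespace WLGW

variable {X Y W : Type*}

/-- A probability mass function on a finite type. -/
def IsPMF [Fintype X] (p : X → ℝ) : Prop :=
  (∀ x, 0 ≤ p x) ∧ ∑ x, p x = 1

/-- `γ` is a coupling of `p` and `q`. -/
def IsCoupling [Fintype X] [Fintype Y] (p : X → ℝ) (q : Y → ℝ) (γ : X → Y → ℝ) : Prop :=
  (∀ x y, 0 ≤ γ x y) ∧ (∀ x, ∑ y, γ x y = p x) ∧ (∀ y, ∑ x, γ x y = q y)

/-- `(m, μ)` is a measure Markov chain: each `m x` is a pmf, and `μ` is a fully supported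
stationary pmf. -/
def IsMMC [Fintype X] (m : X → X → ℝ) (μ : X → ℝ) : Prop :=
  (∀ x, IsPMF (m x)) ∧ IsPMF μ ∧ (∀ x, 0 < μ x) ∧ (∀ x', ∑ x, m x x' * μ x = μ x')

/-- `dX` is a metric on the finite type `X`. -/
def IsMetricOn [Fintype X] (dX : X → X → ℝ) : Prop :=
  (∀ x, dX x x = 0) ∧ (∀ x y, dX x y = dX y x) ∧ (∀ x y, x ≠ y → 0 < dX x y) ∧
    (∀ x y z, dX x z ≤ dX x y + dX y z)

/-- The iterated Weisfeiler–Lehman cost `D_k`. -/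
noncomputable def costIter [Fintype X] [Fintype Y] (mX : X → X → ℝ) (mY : Y → Y → ℝ)
    (D0 : X → Y → ℝ) : ℕ → X → Y → ℝ
  | 0 => D0
  | k + 1 => fun x y => sInf {r : ℝ | ∃ γ : X → Y → ℝ, IsCoupling (mX x) (mY y) γ ∧
      r = ∑ x', ∑ y', costIter mX mY D0 k x' y' * γ x' y'}

/-- The Weisfeiler–Lehman distance of depth `k` between two labeled measure Markov chains. -/
noncomputable def dWL {Z : Type*} [PseudoMetricSpace Z] [Fintype X] [Fintype Y]
    (mX : X → X → ℝ) (μX : X → ℝ) (ℓX : X → Z)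
    (mY : Y → Y → ℝ) (μY : Y → ℝ) (ℓY : Y → Z) (k : ℕ) : ℝ :=
  sInf {r : ℝ | ∃ γ : X → Y → ℝ, IsCoupling μX μY γ ∧
      r = ∑ x, ∑ y, costIter mX mY (fun x y => dist (ℓX x) (ℓY y)) k x y * γ x y}

/-- The absolute Weisfeiler–Lehman distance. -/
noncomputable def dWLsup {Z : Type*} [PseudoMetricSpace Z] [Fintype X] [Fintype Y]
    (mX : X → X → ℝ) (μX : X → ℝ) (ℓX : X → Z)
    (mY : Y → Y → ℝ) (μY : Y → ℝ) (ℓY : Y → Z) : ℝ :=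
  ⨆ k : ℕ, dWL mX μX ℓX mY μY ℓY k

/-- Isomorphism of labeled measure Markov chains. -/
def LMMCIso {Z : Type*} [Fintype X] [Fintype Y]
    (mX : X → X → ℝ) (μX : X → ℝ) (ℓX : X → Z)
    (mY : Y → Y → ℝ) (μY : Y → ℝ) (ℓY : Y → Z) : Prop :=
  ∃ ψ : X ≃ Y, (∀ x, ℓY (ψ x) = ℓX x) ∧ (∀ x x', mY (ψ x) (ψ x') = mX x x') ∧
    (∀ x, μY (ψ x) = μX x)

/-- The `q`-Markov kernel of a finite simple graph. -/
noncomputable def graphKernel {V : Type*} [Fintype V] [DecidableEq V] (G : SimpleGraph V) [DecidableRel G.Adj]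
    (q : ℝ) (v v' : V) : ℝ :=
  if G.degree v = 0 then (if v' = v then 1 else 0)
  else (if v' = v then q else 0) + (if G.Adj v v' then (1 - q) / (G.degree v : ℝ) else 0)

/-- The stationary degree measure of a finite simple graph. -/
noncomputable def graphMu {V : Type*} [Fintype V] (G : SimpleGraph V) [DecidableRel G.Adj]
    (v : V) : ℝ :=
  ((max (G.degree v) 1 : ℕ) : ℝ) / ∑ v', ((max (G.degree v') 1 : ℕ) : ℝ)

/-- The type of depth-`k` Weisfeiler–Lehman labels over an initial label set `Z`. -/
def WLType (Z : Type*) : ℕ → Type _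
  | 0 => Z
  | k + 1 => WLType Z k × Multiset (WLType Z k)

/-- The Weisfeiler–Lehman label hierarchy `ℓ^k` of a labeled graph. -/
def wlLabel {V Z : Type*} [Fintype V] (G : SimpleGraph V) [DecidableRel G.Adj] (ℓ : V → Z) :
    (k : ℕ) → V → WLType Z k
  | 0 => ℓ
  | k + 1 => fun v => (wlLabel G ℓ k v, (G.neighborFinset v).val.map (wlLabel G ℓ k))

/-- The multiset `L_k((G, ℓ))` of depth-`k` WL labels of all vertices. -/
def wlMultiset {V Z : Type*} [Fintype V] (G : SimpleGraph V) [DecidableRel G.Adj]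
    (ℓ : V → Z) (k : ℕ) : Multiset (WLType Z k) :=
  Finset.univ.val.map (wlLabel G ℓ k)

/-- The WL test distinguishes two labeled graphs. -/
def WLDistinguishes {V₁ V₂ Z : Type*} [Fintype V₁] [Fintype V₂]
    (G₁ : SimpleGraph V₁) [DecidableRel G₁.Adj] (ℓ₁ : V₁ → Z)
    (G₂ : SimpleGraph V₂) [DecidableRel G₂.Adj] (ℓ₂ : V₂ → Z) : Prop :=
  ∃ k, wlMultiset G₁ ℓ₁ k ≠ wlMultiset G₂ ℓ₂ k

/-- The relabeling `ℓ^g(v) = g(ℓ(v), deg v, |V|)`. -/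
def relabel {V Z Z₁ : Type*} [Fintype V] (G : SimpleGraph V) [DecidableRel G.Adj]
    (ℓ : V → Z) (g : Z × ℕ × ℕ → Z₁) : V → Z₁ :=
  fun v => g (ℓ v, G.degree v, Fintype.card V)

/-- `kpow m k = m^{⊗k}`, the `k`-step Markov kernel (`kpow m 0` is the identity kernel). -/
def kpow [Fintype X] [DecidableEq X] (m : X → X → ℝ) : ℕ → X → X → ℝ
  | 0 => fun x x' => if x' = x then 1 else 0
  | k + 1 => fun x x'' => ∑ x', kpow m k x' x'' * m x x'

/-- The Wasserstein distance between the pushforwards `(ℓX)_# p` and `(ℓY)_# q`, expressed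
through couplings of `p` and `q`. -/
noncomputable def wassersteinCost {Z : Type*} [PseudoMetricSpace Z] [Fintype X] [Fintype Y]
    (ℓX : X → Z) (ℓY : Y → Z) (p : X → ℝ) (q : Y → ℝ) : ℝ :=
  sInf {r : ℝ | ∃ γ : X → Y → ℝ, IsCoupling p q γ ∧
      r = ∑ x, ∑ y, dist (ℓX x) (ℓY y) * γ x y}

/-- The lower bound `d_WLLB^(k)` for the WL distance. -/
noncomputable def dWLLB {Z : Type*} [PseudoMetricSpace Z] [Fintype X] [Fintype Y]
    [DecidableEq X] [DecidableEq Y]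
    (mX : X → X → ℝ) (μX : X → ℝ) (ℓX : X → Z)
    (mY : Y → Y → ℝ) (μY : Y → ℝ) (ℓY : Y → Z) (k : ℕ) : ℝ :=
  sInf {r : ℝ | ∃ γ : X → Y → ℝ, IsCoupling μX μY γ ∧
      r = ∑ x, ∑ y, wassersteinCost ℓX ℓY (kpow mX k x) (kpow mY k y) * γ x y}

/-- Dimension sequence of an MCNN: `mcnnDim d dims 0 = d`, then `dims`. -/
def mcnnDim (d : ℕ) (dims : ℕ → ℕ) : ℕ → ℕ
  | 0 => d
  | i + 1 => dims i

/-- A `k`-layer Markov chain neural network on `ℝ^d`-LMMCs: Lipschitz maps `φ_1, …, φ_{k+1}`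
followed by a continuous map `ψ`. -/
structure MCNN (d k : ℕ) where
  dims : ℕ → ℕ
  φ : (i : ℕ) → EuclideanSpace ℝ (Fin (mcnnDim d dims i)) →
      EuclideanSpace ℝ (Fin (mcnnDim d dims (i + 1)))
  φ_lip : ∀ i, ∃ K : ℝ≥0, LipschitzWith K (φ i)
  ψ : EuclideanSpace ℝ (Fin (mcnnDim d dims (k + 1))) → ℝ
  ψ_cont : Continuous ψ

/-- Labels after `j` layers of an MCNN (the map `F_{φ_j} ∘ ⋯ ∘ F_{φ_1}`). -/
noncomputable def mcnnLabel {X : Type*} [Fintype X] {d k : ℕ} (N : MCNN d k)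
    (m : X → X → ℝ) (ℓ : X → EuclideanSpace ℝ (Fin d)) :
    (j : ℕ) → X → EuclideanSpace ℝ (Fin (mcnnDim d N.dims j))
  | 0 => ℓ
  | j + 1 => fun x => ∑ x', m x x' • N.φ j (mcnnLabel N m ℓ j x')

/-- Evaluation of an MCNN on an `ℝ^d`-LMMC: `ψ ∘ S_{φ_{k+1}} ∘ F_{φ_k} ∘ ⋯ ∘ F_{φ_1}`. -/
noncomputable def mcnnEval {X : Type*} [Fintype X] {d k : ℕ} (N : MCNN d k)
    (m : X → X → ℝ) (μ : X → ℝ) (ℓ : X → EuclideanSpace ℝ (Fin d)) : ℝ :=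
  N.ψ (∑ x, μ x • N.φ k (mcnnLabel N m ℓ k x))

/-- `k`-step couplings between the Markov kernels `mX` and `mY` (defined for `k ≥ 1`). -/
def IsStepCoupling [Fintype X] [Fintype Y] (mX : X → X → ℝ) (mY : Y → Y → ℝ) :
    ℕ → (X → Y → X → Y → ℝ) → Prop
  | 0, _ => False
  | 1, ν => ∀ x y, IsCoupling (mX x) (mY y) (ν x y)
  | k + 2, ν => ∃ νk ν1 : X → Y → X → Y → ℝ,
      IsStepCoupling mX mY (k + 1) νk ∧ (∀ x y, IsCoupling (mX x) (mY y) (ν1 x y)) ∧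
      ν = fun x y x' y' => ∑ x'', ∑ y'', νk x'' y'' x' y' * ν1 x y x'' y''

/-- The `k`-distortion `dis^(k)(γ, ν)`. -/
def disk [Fintype X] [Fintype Y] (dX : X → X → ℝ) (dY : Y → Y → ℝ)
    (γ : X → Y → ℝ) (ν : X → Y → X → Y → ℝ) : ℝ :=
  ∑ x, ∑ y, ∑ x'', ∑ y'', ∑ x', ∑ y',
    |dX x x' - dY y y'| * ν x'' y'' x' y' * γ x'' y'' * γ x y

/-- The `k`-Gromov–Wasserstein distance between Markov chain metric spaces. -/
noncomputable def dGWk [Fintype X] [Fintype Y]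
    (mX : X → X → ℝ) (dX : X → X → ℝ) (μX : X → ℝ)
    (mY : Y → Y → ℝ) (dY : Y → Y → ℝ) (μY : Y → ℝ) (k : ℕ) : ℝ :=
  sInf {r : ℝ | ∃ (γ : X → Y → ℝ) (ν : X → Y → X → Y → ℝ),
      IsCoupling μX μY γ ∧ IsStepCoupling mX mY k ν ∧ r = disk dX dY γ ν}

/-- The absolute Gromov–Wasserstein distance between MCMSs: `sup_{k ≥ 1} d_GW^(k)`. -/
noncomputable def dGWMCMS [Fintype X] [Fintype Y]
    (mX : X → X → ℝ) (dX : X → X → ℝ) (μX : X → ℝ)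
    (mY : Y → Y → ℝ) (dY : Y → Y → ℝ) (μY : Y → ℝ) : ℝ :=
  ⨆ k : ℕ, dGWk mX dX μX mY dY μY (k + 1)

/-- Isomorphism of Markov chain metric spaces. -/
def MCMSIso [Fintype X] [Fintype Y]
    (mX : X → X → ℝ) (dX : X → X → ℝ) (μX : X → ℝ)
    (mY : Y → Y → ℝ) (dY : Y → Y → ℝ) (μY : Y → ℝ) : Prop :=
  ∃ ψ : X ≃ Y, (∀ x x', dY (ψ x) (ψ x') = dX x x') ∧
    (∀ x x', mY (ψ x) (ψ x') = mX x x') ∧ (∀ x, μY (ψ x) = μX x)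

/-- The decoupled Gromov–Wasserstein distance between finite metric measure spaces. -/
noncomputable def dGWbi [Fintype X] [Fintype Y]
    (dX : X → X → ℝ) (μX : X → ℝ) (dY : Y → Y → ℝ) (μY : Y → ℝ) : ℝ :=
  sInf {r : ℝ | ∃ γ γ' : X → Y → ℝ, IsCoupling μX μY γ ∧ IsCoupling μX μY γ' ∧
      r = ∑ x, ∑ y, ∑ x', ∑ y', |dX x x' - dY y y'| * γ' x' y' * γ x y}

/-- `k`-step couplings between the measures `μX` and `μY`
(`k = 0` gives ordinary couplings). -/
def IsMeasureStepCoupling [Fintype X] [Fintype Y] (mX : X → X → ℝ) (mY : Y → Y → ℝ)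
    (μX : X → ℝ) (μY : Y → ℝ) : ℕ → (X → Y → ℝ) → Prop
  | 0, γ => IsCoupling μX μY γ
  | k + 1, γk => ∃ (γ : X → Y → ℝ) (ν : X → Y → X → Y → ℝ),
      IsCoupling μX μY γ ∧ IsStepCoupling mX mY (k + 1) ν ∧
      γk = fun x' y' => ∑ x, ∑ y, ν x y x' y' * γ x y

/-- The WWL label iteration. -/
noncomputable def wwlLabel {V : Type*} [Fintype V] {d : ℕ} (G : SimpleGraph V)
    [DecidableRel G.Adj] (ℓ : V → EuclideanSpace ℝ (Fin d)) :
    ℕ → V → EuclideanSpace ℝ (Fin d)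
  | 0 => ℓ
  | i + 1 => fun v => (1 / 2 : ℝ) •
      (wwlLabel G ℓ i v + ((G.degree v : ℝ))⁻¹ • ∑ v' ∈ G.neighborFinset v, wwlLabel G ℓ i v')

/-- The stacked WWL label `L^k_G = (ℓ^0, …, ℓ^k)`, valued in Euclidean `ℝ^{d(k+1)}`. -/
noncomputable def stackedLabel {V : Type*} [Fintype V] {d : ℕ} (G : SimpleGraph V)
    [DecidableRel G.Adj] (ℓ : V → EuclideanSpace ℝ (Fin d)) (k : ℕ) (v : V) :
    EuclideanSpace ℝ (Fin (k + 1) × Fin d) :=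
  WithLp.toLp 2 (fun p : Fin (k + 1) × Fin d => wwlLabel G ℓ (p.1 : ℕ) v p.2)

section Aux

open scoped Classical

variable {X Y W : Type*} [Fintype X] [Fintype Y] [Fintype W]

/-- The set of total transport costs over couplings of `p` and `q` with cost `c`. -/
def cSet (p : X → ℝ) (q : Y → ℝ) (c : X → Y → ℝ) : Set ℝ :=
  {r : ℝ | ∃ γ : X → Y → ℝ, IsCoupling p q γ ∧ r = ∑ x, ∑ y, c x y * γ x y}

lemma prodCoupling {p : X → ℝ} {q : Y → ℝ} (hp : IsPMF p) (hq : IsPMF q) :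
    IsCoupling p q fun x y => p x * q y := by
  refine ⟨fun x y => mul_nonneg (hp.1 x) (hq.1 y), fun x => ?_, fun y => ?_⟩
  · rw [← Finset.mul_sum, hq.2, mul_one]
  · rw [← Finset.sum_mul, hp.2, one_mul]

lemma mem_cSet_nonneg {p : X → ℝ} {q : Y → ℝ} {c : X → Y → ℝ}
    (hc : ∀ x y, 0 ≤ c x y) {r : ℝ} (hr : r ∈ cSet p q c) : 0 ≤ r := by
  obtain ⟨γ, hγ, rfl⟩ := hr
  exact Finset.sum_nonneg fun x _ => Finset.sum_nonneg fun y _ =>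
    mul_nonneg (hc x y) (hγ.1 x y)

lemma bddBelow_cSet {p : X → ℝ} {q : Y → ℝ} {c : X → Y → ℝ}
    (hc : ∀ x y, 0 ≤ c x y) : BddBelow (cSet p q c) :=
  ⟨0, fun _ hr => mem_cSet_nonneg hc hr⟩

lemma sInf_cSet_nonneg {p : X → ℝ} {q : Y → ℝ} {c : X → Y → ℝ}
    (hc : ∀ x y, 0 ≤ c x y) : 0 ≤ sInf (cSet p q c) :=
  Real.sInf_nonneg fun _ hr => mem_cSet_nonneg hc hr

lemma sInf_cSet_le {p : X → ℝ} {q : Y → ℝ} {c : X → Y → ℝ} {γ : X → Y → ℝ}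
    (hc : ∀ x y, 0 ≤ c x y) (hγ : IsCoupling p q γ) :
    sInf (cSet p q c) ≤ ∑ x, ∑ y, c x y * γ x y :=
  csInf_le (bddBelow_cSet hc) ⟨γ, hγ, rfl⟩

lemma sInf_cSet_le_const {p : X → ℝ} {q : Y → ℝ} {c : X → Y → ℝ} {C : ℝ}
    (hp : IsPMF p) (hq : IsPMF q) (hc0 : ∀ x y, 0 ≤ c x y) (hcC : ∀ x y, c x y ≤ C) :
    sInf (cSet p q c) ≤ C := by
  refine le_trans (sInf_cSet_le hc0 (prodCoupling hp hq)) ?_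
  have h1 : ∑ x, ∑ y, c x y * (p x * q y) ≤ ∑ x, ∑ y, C * (p x * q y) :=
    Finset.sum_le_sum fun x _ => Finset.sum_le_sum fun y _ =>
      mul_le_mul_of_nonneg_right (hcC x y) (mul_nonneg (hp.1 x) (hq.1 y))
  refine h1.trans_eq ?_
  have : ∀ x, ∑ y, C * (p x * q y) = C * p x := by
    intro x
    simp only [← Finset.mul_sum]
    rw [hq.2, mul_one]
  simp only [this]
  rw [← Finset.mul_sum, hp.2, mul_one]

lemma coupling_zero_right {p : X → ℝ} {q : Y → ℝ} {γ : X → Y → ℝ}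
    (hγ : IsCoupling p q γ) {y : Y} (hy : q y = 0) (x : X) : γ x y = 0 :=
  (Finset.sum_eq_zero_iff_of_nonneg fun x _ => hγ.1 x y).mp
    ((hγ.2.2 y).trans hy) x (Finset.mem_univ x)

lemma coupling_zero_left {p : X → ℝ} {q : Y → ℝ} {γ : X → Y → ℝ}
    (hγ : IsCoupling p q γ) {x : X} (hx : p x = 0) (y : Y) : γ x y = 0 :=
  (Finset.sum_eq_zero_iff_of_nonneg fun y _ => hγ.1 x y).mp
    ((hγ.2.1 x).trans hx) y (Finset.mem_univ y)

lemma IsCoupling.symm' {p : X → ℝ} {q : Y → ℝ} {γ : X → Y → ℝ}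
    (hγ : IsCoupling p q γ) : IsCoupling q p fun y x => γ x y :=
  ⟨fun y x => hγ.1 x y, hγ.2.2, hγ.2.1⟩

lemma cSet_symm {p : X → ℝ} {q : Y → ℝ} {c : X → Y → ℝ} {c' : Y → X → ℝ}
    (hc : ∀ x y, c x y = c' y x) : cSet p q c = cSet q p c' := by
  ext r
  constructor
  · rintro ⟨γ, hγ, rfl⟩
    refine ⟨fun y x => γ x y, hγ.symm', ?_⟩
    rw [Finset.sum_comm]
    exact Finset.sum_congr rfl fun x _ => Finset.sum_congr rfl fun y _ => by rw [hc]
  · rintro ⟨γ, hγ, rfl⟩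
    refine ⟨fun x y => γ y x, hγ.symm', ?_⟩
    rw [Finset.sum_comm]
    exact Finset.sum_congr rfl fun y _ => Finset.sum_congr rfl fun x _ => by rw [hc]

lemma glue_sum_right {p : X → ℝ} {q : Y → ℝ} {r : W → ℝ} {γ1 : X → Y → ℝ} {γ2 : Y → W → ℝ}
    (h1 : IsCoupling p q γ1) (h2 : IsCoupling q r γ2) (x : X) (y : Y) :
    ∑ w, γ1 x y * γ2 y w / q y = γ1 x y := by
  simp only [div_eq_mul_inv]
  rw [← Finset.sum_mul, ← Finset.mul_sum, h2.2.1 y]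
  by_cases hy : q y = 0
  · simp [coupling_zero_right h1 hy x]
  · rw [mul_assoc, mul_inv_cancel₀ hy, mul_one]

lemma glue_sum_left {p : X → ℝ} {q : Y → ℝ} {r : W → ℝ} {γ1 : X → Y → ℝ} {γ2 : Y → W → ℝ}
    (h1 : IsCoupling p q γ1) (h2 : IsCoupling q r γ2) (y : Y) (w : W) :
    ∑ x, γ1 x y * γ2 y w / q y = γ2 y w := by
  simp only [div_eq_mul_inv]
  have : ∀ x, γ1 x y * γ2 y w * (q y)⁻¹ = γ1 x y * (γ2 y w * (q y)⁻¹) := fun x => by ring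
  simp only [this]
  rw [← Finset.sum_mul, h1.2.2 y]
  by_cases hy : q y = 0
  · simp [coupling_zero_left h2 hy w]
  · rw [mul_comm (γ2 y w), ← mul_assoc, mul_inv_cancel₀ hy, one_mul]

lemma glue_coupling {p : X → ℝ} {q : Y → ℝ} {r : W → ℝ} {γ1 : X → Y → ℝ} {γ2 : Y → W → ℝ}
    (h1 : IsCoupling p q γ1) (h2 : IsCoupling q r γ2) :
    IsCoupling p r fun x w => ∑ y, γ1 x y * γ2 y w / q y := by
  have hq0 : ∀ y, 0 ≤ q y := fun y =>
    (h2.2.1 y) ▸ Finset.sum_nonneg fun w _ => h2.1 y w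
  refine ⟨fun x w => Finset.sum_nonneg fun y _ =>
    div_nonneg (mul_nonneg (h1.1 x y) (h2.1 y w)) (hq0 y), fun x => ?_, fun w => ?_⟩
  · rw [Finset.sum_comm]
    simp only [glue_sum_right h1 h2 x]
    exact h1.2.1 x
  · rw [Finset.sum_comm]
    simp only [glue_sum_left h1 h2]
    exact h2.2.2 w

lemma glue_cost {p : X → ℝ} {q : Y → ℝ} {r : W → ℝ} {γ1 : X → Y → ℝ} {γ2 : Y → W → ℝ}
    {cXY : X → Y → ℝ} {cYW : Y → W → ℝ} {cXW : X → W → ℝ}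
    (h1 : IsCoupling p q γ1) (h2 : IsCoupling q r γ2)
    (htri : ∀ x y w, cXW x w ≤ cXY x y + cYW y w) :
    ∑ x, ∑ w, cXW x w * (∑ y, γ1 x y * γ2 y w / q y)
      ≤ (∑ x, ∑ y, cXY x y * γ1 x y) + (∑ y, ∑ w, cYW y w * γ2 y w) := by
  have hq0 : ∀ y, 0 ≤ q y := fun y =>
    (h2.2.1 y) ▸ Finset.sum_nonneg fun w _ => h2.1 y w
  have ht0 : ∀ x y w, 0 ≤ γ1 x y * γ2 y w / q y := fun x y w =>
    div_nonneg (mul_nonneg (h1.1 x y) (h2.1 y w)) (hq0 y)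
  calc ∑ x, ∑ w, cXW x w * (∑ y, γ1 x y * γ2 y w / q y)
      = ∑ x, ∑ w, ∑ y, cXW x w * (γ1 x y * γ2 y w / q y) := by
        simp only [Finset.mul_sum]
    _ ≤ ∑ x, ∑ w, ∑ y, (cXY x y + cYW y w) * (γ1 x y * γ2 y w / q y) :=
        Finset.sum_le_sum fun x _ => Finset.sum_le_sum fun w _ =>
          Finset.sum_le_sum fun y _ =>
            mul_le_mul_of_nonneg_right (htri x y w) (ht0 x y w)
    _ = (∑ x, ∑ w, ∑ y, cXY x y * (γ1 x y * γ2 y w / q y))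
          + (∑ x, ∑ w, ∑ y, cYW y w * (γ1 x y * γ2 y w / q y)) := by
        simp only [add_mul, Finset.sum_add_distrib]
    _ = (∑ x, ∑ y, cXY x y * γ1 x y) + (∑ y, ∑ w, cYW y w * γ2 y w) := by
        congr 1
        · refine Finset.sum_congr rfl fun x _ => ?_
          rw [Finset.sum_comm]
          refine Finset.sum_congr rfl fun y _ => ?_
          rw [← Finset.mul_sum, glue_sum_right h1 h2 x y]
        · have hkey : ∀ w : W, ∑ x, ∑ y, cYW y w * (γ1 x y * γ2 y w / q y)
              = ∑ y, cYW y w * γ2 y w := by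
            intro w
            rw [Finset.sum_comm]
            refine Finset.sum_congr rfl fun y _ => ?_
            rw [← Finset.mul_sum, glue_sum_left h1 h2 y w]
          rw [Finset.sum_comm]
          simp only [hkey]
          exact Finset.sum_comm

lemma sInf_cSet_triangle {p : X → ℝ} {q : Y → ℝ} {r : W → ℝ}
    {cXY : X → Y → ℝ} {cYW : Y → W → ℝ} {cXW : X → W → ℝ}
    (hp : IsPMF p) (hq : IsPMF q) (hr : IsPMF r)
    (h0XY : ∀ x y, 0 ≤ cXY x y) (h0YW : ∀ y w, 0 ≤ cYW y w) (h0XW : ∀ x w, 0 ≤ cXW x w)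
    (htri : ∀ x y w, cXW x w ≤ cXY x y + cYW y w) :
    sInf (cSet p r cXW) ≤ sInf (cSet p q cXY) + sInf (cSet q r cYW) := by
  refine le_of_forall_pos_le_add fun ε hε => ?_
  have hne1 : (cSet p q cXY).Nonempty := ⟨_, _, prodCoupling hp hq, rfl⟩
  have hne2 : (cSet q r cYW).Nonempty := ⟨_, _, prodCoupling hq hr, rfl⟩
  obtain ⟨r1, ⟨γ1, hγ1, rfl⟩, hlt1⟩ := Real.lt_sInf_add_pos hne1 (half_pos hε)
  obtain ⟨r2, ⟨γ2, hγ2, rfl⟩, hlt2⟩ := Real.lt_sInf_add_pos hne2 (half_pos hε)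
  have hle : sInf (cSet p r cXW) ≤ ∑ x, ∑ w, cXW x w * (∑ y, γ1 x y * γ2 y w / q y) :=
    sInf_cSet_le h0XW (glue_coupling hγ1 hγ2)
  have := glue_cost hγ1 hγ2 htri
  linarith

lemma IsPMF.nonempty' {p : X → ℝ} (hp : IsPMF p) : Nonempty X := by
  by_contra h
  rw [not_nonempty_iff] at h
  have := hp.2
  rw [Finset.univ_eq_empty, Finset.sum_empty] at this
  exact one_ne_zero this.symm

lemma costIter_nonneg {mX : X → X → ℝ} {mY : Y → Y → ℝ} {D0 : X → Y → ℝ}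
    (h0 : ∀ x y, 0 ≤ D0 x y) : ∀ k x y, 0 ≤ costIter mX mY D0 k x y := by
  intro k
  induction k with
  | zero => exact h0
  | succ k ih => exact fun x y => sInf_cSet_nonneg ih

lemma costIter_le_const {mX : X → X → ℝ} {mY : Y → Y → ℝ} {D0 : X → Y → ℝ} {C : ℝ}
    (hmX : ∀ x, IsPMF (mX x)) (hmY : ∀ y, IsPMF (mY y))
    (h0 : ∀ x y, 0 ≤ D0 x y) (hC : ∀ x y, D0 x y ≤ C) :
    ∀ k x y, costIter mX mY D0 k x y ≤ C := by
  intro k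
  induction k with
  | zero => exact hC
  | succ k ih =>
    exact fun x y => sInf_cSet_le_const (hmX x) (hmY y) (costIter_nonneg h0 k) ih

lemma costIter_symm {mX : X → X → ℝ} {mY : Y → Y → ℝ} {D0 : X → Y → ℝ} {D0' : Y → X → ℝ}
    (h : ∀ x y, D0 x y = D0' y x) :
    ∀ k x y, costIter mX mY D0 k x y = costIter mY mX D0' k y x := by
  intro k
  induction k with
  | zero => exact h
  | succ k ih =>
    intro x y
    show sInf (cSet (mX x) (mY y) (costIter mX mY D0 k))
        = sInf (cSet (mY y) (mX x) (costIter mY mX D0' k))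
    rw [cSet_symm ih]

lemma costIter_triangle {mX : X → X → ℝ} {mY : Y → Y → ℝ} {mW : W → W → ℝ}
    {DXY : X → Y → ℝ} {DYW : Y → W → ℝ} {DXW : X → W → ℝ}
    (hmX : ∀ x, IsPMF (mX x)) (hmY : ∀ y, IsPMF (mY y)) (hmW : ∀ w, IsPMF (mW w))
    (h0XY : ∀ x y, 0 ≤ DXY x y) (h0YW : ∀ y w, 0 ≤ DYW y w) (h0XW : ∀ x w, 0 ≤ DXW x w)
    (htri : ∀ x y w, DXW x w ≤ DXY x y + DYW y w) :
    ∀ k x y w, costIter mX mW DXW k x w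
      ≤ costIter mX mY DXY k x y + costIter mY mW DYW k y w := by
  intro k
  induction k with
  | zero => exact htri
  | succ k ih =>
    intro x y w
    exact sInf_cSet_triangle (hmX x) (hmY y) (hmW w)
      (costIter_nonneg h0XY k) (costIter_nonneg h0YW k) (costIter_nonneg h0XW k)
      (ih · · ·)

lemma iso_coupling (ψ : X ≃ Y) {p : X → ℝ} {q : Y → ℝ} (hp : IsPMF p)
    (hq : ∀ x, q (ψ x) = p x) :
    IsCoupling p q fun x y => if y = ψ x then p x else 0 := by
  refine ⟨fun x y => by by_cases h : y = ψ x <;> simp [h, hp.1 x], fun x => ?_, fun y => ?_⟩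
  · simp
  · have hiff : ∀ x : X, (y = ψ x) ↔ (x = ψ.symm y) := fun x => by
      rw [eq_comm, Equiv.apply_eq_iff_eq_symm_apply]
    simp only [hiff]
    rw [Finset.sum_ite_eq' Finset.univ (ψ.symm y) p]
    simp only [Finset.mem_univ, if_true]
    rw [← hq (ψ.symm y), Equiv.apply_symm_apply]

lemma sInf_cSet_iso_zero (ψ : X ≃ Y) {p : X → ℝ} {q : Y → ℝ} {c : X → Y → ℝ}
    (hp : IsPMF p) (hq : ∀ x, q (ψ x) = p x)
    (h0 : ∀ x y, 0 ≤ c x y) (hc : ∀ x, c x (ψ x) = 0) :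
    sInf (cSet p q c) = 0 := by
  refine le_antisymm ?_ (sInf_cSet_nonneg h0)
  refine le_trans (sInf_cSet_le h0 (iso_coupling ψ hp hq)) (le_of_eq ?_)
  refine Finset.sum_eq_zero fun x _ => Finset.sum_eq_zero fun y _ => ?_
  by_cases h : y = ψ x
  · simp [h, hc x]
  · simp [h]

lemma costIter_iso_zero {mX : X → X → ℝ} {mY : Y → Y → ℝ} {D0 : X → Y → ℝ}
    (ψ : X ≃ Y) (hmX : ∀ x, IsPMF (mX x)) (hm : ∀ x x', mY (ψ x) (ψ x') = mX x x')
    (h0 : ∀ x y, 0 ≤ D0 x y) (hD : ∀ x, D0 x (ψ x) = 0) :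
    ∀ k x, costIter mX mY D0 k x (ψ x) = 0 := by
  intro k
  induction k with
  | zero => exact hD
  | succ k ih =>
    intro x
    exact sInf_cSet_iso_zero ψ (hmX x) (hm x) (costIter_nonneg h0 k) ih

lemma dWL_bound {Z : Type*} [PseudoMetricSpace Z]
    {mX : X → X → ℝ} {μX : X → ℝ} {ℓX : X → Z}
    {mY : Y → Y → ℝ} {μY : Y → ℝ} {ℓY : Y → Z}
    (hX : IsMMC mX μX) (hY : IsMMC mY μY) :
    ∃ C : ℝ, ∀ k, dWL mX μX ℓX mY μY ℓY k ≤ C := by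
  obtain ⟨C, hC⟩ :=
    Finset.exists_le ((Finset.univ : Finset (X × Y)).image fun p => dist (ℓX p.1) (ℓY p.2))
  refine ⟨C, fun k => ?_⟩
  have hCk : ∀ x y, dist (ℓX x) (ℓY y) ≤ C := fun x y =>
    hC _ (Finset.mem_image_of_mem _ (Finset.mem_univ (x, y)))
  exact sInf_cSet_le_const hX.2.1 hY.2.1
    (costIter_nonneg (fun x y => dist_nonneg) k)
    (costIter_le_const hX.1 hY.1 (fun x y => dist_nonneg) hCk k)

end Aux

theorem dWL_pseudometric {X Y W Z : Type*} [Fintype X] [Fintype Y] [Fintype W] [MetricSpace Z]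
    (k : ℕ)
    (mX : X → X → ℝ) (μX : X → ℝ) (ℓX : X → Z)
    (mY : Y → Y → ℝ) (μY : Y → ℝ) (ℓY : Y → Z)
    (mW : W → W → ℝ) (μW : W → ℝ) (ℓW : W → Z)
    (hX : IsMMC mX μX) (hY : IsMMC mY μY) (hW : IsMMC mW μW) :
    (0 ≤ dWL mX μX ℓX mY μY ℓY k) ∧
    (dWL mX μX ℓX mY μY ℓY k = dWL mY μY ℓY mX μX ℓX k) ∧
    (dWL mX μX ℓX mW μW ℓW k ≤ dWL mX μX ℓX mY μY ℓY k + dWL mY μY ℓY mW μW ℓW k) ∧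
    (LMMCIso mX μX ℓX mY μY ℓY → dWL mX μX ℓX mY μY ℓY k = 0) ∧
    (0 ≤ dWLsup mX μX ℓX mY μY ℓY) ∧
    (dWLsup mX μX ℓX mY μY ℓY = dWLsup mY μY ℓY mX μX ℓX) ∧
    (dWLsup mX μX ℓX mW μW ℓW ≤ dWLsup mX μX ℓX mY μY ℓY + dWLsup mY μY ℓY mW μW ℓW) ∧
    (LMMCIso mX μX ℓX mY μY ℓY → dWLsup mX μX ℓX mY μY ℓY = 0) := by
  classical
  have hmX := hX.1
  have hμX := hX.2.1
  have hmY := hY.1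
  have hμY := hY.2.1
  have hmW := hW.1
  have hμW := hW.2.1
  have part1 : ∀ k', 0 ≤ dWL mX μX ℓX mY μY ℓY k' := fun k' =>
    sInf_cSet_nonneg (costIter_nonneg (fun _ _ => dist_nonneg) k')
  have part2 : ∀ k', dWL mX μX ℓX mY μY ℓY k' = dWL mY μY ℓY mX μX ℓX k' := by
    intro k'
    show sInf (cSet μX μY (costIter mX mY (fun x y => dist (ℓX x) (ℓY y)) k'))
        = sInf (cSet μY μX (costIter mY mX (fun y x => dist (ℓY y) (ℓX x)) k'))
    rw [cSet_symm (costIter_symm (fun x y => dist_comm (ℓX x) (ℓY y)) k')]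
  have part3 : ∀ k', dWL mX μX ℓX mW μW ℓW k'
      ≤ dWL mX μX ℓX mY μY ℓY k' + dWL mY μY ℓY mW μW ℓW k' := fun k' =>
    sInf_cSet_triangle hμX hμY hμW
      (costIter_nonneg (fun _ _ => dist_nonneg) k')
      (costIter_nonneg (fun _ _ => dist_nonneg) k')
      (costIter_nonneg (fun _ _ => dist_nonneg) k')
      (costIter_triangle hmX hmY hmW (fun _ _ => dist_nonneg) (fun _ _ => dist_nonneg)
        (fun _ _ => dist_nonneg) (fun x y w => dist_triangle (ℓX x) (ℓY y) (ℓW w)) k')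
  have part4 : ∀ k', LMMCIso mX μX ℓX mY μY ℓY → dWL mX μX ℓX mY μY ℓY k' = 0 := by
    rintro k' ⟨ψ, hℓ, hm, hμ⟩
    exact sInf_cSet_iso_zero ψ hμX hμ
      (costIter_nonneg (fun _ _ => dist_nonneg) k')
      (costIter_iso_zero ψ hmX hm (fun _ _ => dist_nonneg)
        (fun x => by show dist (ℓX x) (ℓY (ψ x)) = 0; rw [hℓ x]; exact dist_self _) k')
  obtain ⟨C1, hC1⟩ := dWL_bound (ℓX := ℓX) (ℓY := ℓY) hX hY
  obtain ⟨C2, hC2⟩ := dWL_bound (ℓX := ℓY) (ℓY := ℓW) hY hW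
  have hb1 : BddAbove (Set.range fun k' => dWL mX μX ℓX mY μY ℓY k') :=
    ⟨C1, by rintro r ⟨k', rfl⟩; exact hC1 k'⟩
  have hb2 : BddAbove (Set.range fun k' => dWL mY μY ℓY mW μW ℓW k') :=
    ⟨C2, by rintro r ⟨k', rfl⟩; exact hC2 k'⟩
  refine ⟨part1 k, part2 k, part3 k, part4 k, ?_, ?_, ?_, ?_⟩
  · exact Real.iSup_nonneg part1
  · exact iSup_congr part2
  · refine ciSup_le fun k' => le_trans (part3 k') ?_
    exact add_le_add (le_ciSup hb1 k') (le_ciSup hb2 k')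
  · intro hiso
    have h0 : ∀ k', dWL mX μX ℓX mY μY ℓY k' = 0 := fun k' => part4 k' hiso
    simp only [dWLsup, h0, ciSup_const]

end WLGW
end

section
/- Let Z and Z₁ be metric spaces and let g : Z × ℕ × ℕ → Z₁ be an injective map. For any two labeled graphs (G₁, ℓ_{G₁} : V_{G₁} → Z) and (G₂, ℓ_{G₂} : V_{G₂} → Z), the Weisfeiler–Lehman test distinguishes (G₁, ℓ_{G₁}) and (G₂, ℓ_{G₂}) if and only if it distinguishes the relabeled graphs (G₁, ℓ_{G₁}^g) and (G₂, ℓ_{G₂}^g). -/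
open scoped BigOperators NNReal

namespace WLGW

variable {X Y W : Type*}

/-- Functorial map on WL label types. -/
def wlMap {Z Z' : Type*} (h : Z → Z') : (k : ℕ) → WLType Z k → WLType Z' k
  | 0 => h
  | k + 1 => fun p => (wlMap h k p.1, p.2.map (wlMap h k))

lemma wlMap_injective {Z Z' : Type*} {h : Z → Z'} (hh : Function.Injective h) :
    ∀ k, Function.Injective (wlMap h k)
  | 0 => hh
  | k + 1 => by
    intro p q hpq
    have h1 := congrArg Prod.fst hpq
    have h2 := congrArg Prod.snd hpq
    exact Prod.ext (wlMap_injective hh k h1)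
      (Multiset.map_injective (wlMap_injective hh k) h2)

lemma wlLabel_comp {V Z Z' : Type*} [Fintype V] (G : SimpleGraph V) [DecidableRel G.Adj]
    (ℓ : V → Z) (h : Z → Z') :
    ∀ k v, wlLabel G (fun v => h (ℓ v)) k v = wlMap h k (wlLabel G ℓ k v)
  | 0, v => rfl
  | k + 1, v => by
    simp only [wlLabel, wlMap, Multiset.map_map]
    exact Prod.ext (wlLabel_comp G ℓ h k v)
      (Multiset.map_congr rfl fun x _ => wlLabel_comp G ℓ h k x)

lemma wlMultiset_comp {V Z Z' : Type*} [Fintype V] (G : SimpleGraph V) [DecidableRel G.Adj]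
    (ℓ : V → Z) (h : Z → Z') (k : ℕ) :
    wlMultiset G (fun v => h (ℓ v)) k = (wlMultiset G ℓ k).map (wlMap h k) := by
  simp only [wlMultiset, Multiset.map_map]
  exact Multiset.map_congr rfl fun x _ => wlLabel_comp G ℓ h k x

/-- Recover depth-`k` labels of the refined labeling from depth-`(k+1)` labels. -/
def phiMap {Z : Type*} (n : ℕ) : (k : ℕ) → WLType Z (k + 1) → WLType (Z × ℕ × ℕ) k
  | 0 => fun p => (p.1, Multiset.card p.2, n)
  | k + 1 => fun p => (phiMap n k p.1, p.2.map (phiMap n k))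

lemma wlLabel_hat {V Z : Type*} [Fintype V] (G : SimpleGraph V) [DecidableRel G.Adj]
    (ℓ : V → Z) :
    ∀ k v, wlLabel G (fun v => (ℓ v, G.degree v, Fintype.card V)) k v
      = phiMap (Fintype.card V) k (wlLabel G ℓ (k + 1) v)
  | 0, v => by
    simp only [wlLabel, phiMap, Multiset.card_map]
    exact Prod.ext rfl (Prod.ext (Multiset.card_map ℓ (G.neighborFinset v).val).symm rfl)
  | k + 1, v => by
    simp only [wlLabel, phiMap, Multiset.map_map]
    refine Prod.ext (wlLabel_hat G ℓ k v) ?_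
    exact (Multiset.map_congr rfl fun x _ => wlLabel_hat G ℓ k x).trans (Multiset.map_map _ _ _).symm

lemma wlMultiset_hat {V Z : Type*} [Fintype V] (G : SimpleGraph V) [DecidableRel G.Adj]
    (ℓ : V → Z) (k : ℕ) :
    wlMultiset G (fun v => (ℓ v, G.degree v, Fintype.card V)) k
      = (wlMultiset G ℓ (k + 1)).map (phiMap (Fintype.card V) k) := by
  simp only [wlMultiset, Multiset.map_map]
  exact Multiset.map_congr rfl fun x _ => wlLabel_hat G ℓ k x

lemma card_wlMultiset {V Z : Type*} [Fintype V] (G : SimpleGraph V) [DecidableRel G.Adj]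
    (ℓ : V → Z) (k : ℕ) : Multiset.card (wlMultiset G ℓ k) = Fintype.card V := by
  simp [wlMultiset]

theorem wl_test_relabel {V₁ V₂ Z Z₁ : Type*} [Fintype V₁] [Fintype V₂]
    [MetricSpace Z] [MetricSpace Z₁]
    (g : Z × ℕ × ℕ → Z₁) (hg : Function.Injective g)
    (G₁ : SimpleGraph V₁) [DecidableRel G₁.Adj] (ℓ₁ : V₁ → Z)
    (G₂ : SimpleGraph V₂) [DecidableRel G₂.Adj] (ℓ₂ : V₂ → Z) :
    WLDistinguishes G₁ ℓ₁ G₂ ℓ₂ ↔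
      WLDistinguishes G₁ (relabel G₁ ℓ₁ g) G₂ (relabel G₂ ℓ₂ g) := by
  set ℓ₁h : V₁ → Z × ℕ × ℕ := fun v => (ℓ₁ v, G₁.degree v, Fintype.card V₁) with hℓ₁h
  set ℓ₂h : V₂ → Z × ℕ × ℕ := fun v => (ℓ₂ v, G₂.degree v, Fintype.card V₂) with hℓ₂h
  have hrel₁ : ∀ k, wlMultiset G₁ (relabel G₁ ℓ₁ g) k
      = (wlMultiset G₁ ℓ₁h k).map (wlMap g k) := fun k => wlMultiset_comp G₁ ℓ₁h g k
  have hrel₂ : ∀ k, wlMultiset G₂ (relabel G₂ ℓ₂ g) k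
      = (wlMultiset G₂ ℓ₂h k).map (wlMap g k) := fun k => wlMultiset_comp G₂ ℓ₂h g k
  constructor
  · rintro ⟨k, hk⟩
    refine ⟨k, fun hcon => hk ?_⟩
    rw [hrel₁ k, hrel₂ k] at hcon
    have hhat : wlMultiset G₁ ℓ₁h k = wlMultiset G₂ ℓ₂h k :=
      Multiset.map_injective (wlMap_injective hg k) hcon
    have h1 : wlMultiset G₁ ℓ₁ k
        = (wlMultiset G₁ ℓ₁h k).map (wlMap Prod.fst k) :=
      wlMultiset_comp G₁ ℓ₁h Prod.fst k
    have h2 : wlMultiset G₂ ℓ₂ k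
        = (wlMultiset G₂ ℓ₂h k).map (wlMap Prod.fst k) :=
      wlMultiset_comp G₂ ℓ₂h Prod.fst k
    rw [h1, h2, hhat]
  · rintro ⟨k, hk⟩
    by_contra hcon
    have hall : ∀ j, wlMultiset G₁ ℓ₁ j = wlMultiset G₂ ℓ₂ j := by
      intro j
      by_contra hj
      exact absurd ⟨j, hj⟩ hcon
    have hcard : Fintype.card V₁ = Fintype.card V₂ := by
      have := congrArg Multiset.card (hall 0)
      rwa [card_wlMultiset, card_wlMultiset] at this
    have hhat : wlMultiset G₁ ℓ₁h k = wlMultiset G₂ ℓ₂h k := by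
      rw [hℓ₁h, hℓ₂h, wlMultiset_hat, wlMultiset_hat, hall (k + 1), hcard]
    exact hk (by rw [hrel₁ k, hrel₂ k, hhat])

end WLGW
end
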